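/- arXiv:2209.08854 — 3 statements merged into one kernel-verified Lean document; each statement's English description precedes it below -/
import Mathlib

section
/- Let C be a 4×4 real symmetric matrix with block form [[P, v],[vᵀ, N]] where P ∈ ℝ³ˣ³ is symmetric, v ∈ ℝ³, and N > 0. Let T = [[R, t],[0, 1]] be a homogeneous pose matrix with RᵀR = I. Then A(T C Tᵀ) = R · A(C) · Rᵀ, where A(C) = (1/N)P − (1/N²)v vᵀ (note that the (4,4)-entry of T C Tᵀ is again N). -/
open Matrix

noncomputable section

/-- Homogeneous coordinates of a point in `ℝ³`. -/
def homog (x : Fin 3 → ℝ) : Fin 4 → ℝ := Fin.snoc x 1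

/-- The point cluster coordinate `ℜ(p) = Σₖ (pₖ,1)(pₖ,1)ᵀ` of a finite family of points. -/
def cluster {n : ℕ} (p : Fin n → Fin 3 → ℝ) : Matrix (Fin 4) (Fin 4) ℝ :=
  ∑ k, vecMulVec (homog (p k)) (homog (p k))

/-- The homogeneous pose matrix `T = [[R, t],[0, 1]]`. -/
def pose (R : Matrix (Fin 3) (Fin 3) ℝ) (t : Fin 3 → ℝ) : Matrix (Fin 4) (Fin 4) ℝ :=
  Matrix.reindex finSumFinEquiv finSumFinEquiv
    (Matrix.fromBlocks R (Matrix.of fun i (_ : Fin 1) => t i)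
      (0 : Matrix (Fin 1) (Fin 3) ℝ) (1 : Matrix (Fin 1) (Fin 1) ℝ))

/-- The upper-left `3×3` block `P` of a `4×4` matrix. -/
def Pblk (C : Matrix (Fin 4) (Fin 4) ℝ) : Matrix (Fin 3) (Fin 3) ℝ :=
  Matrix.of fun i j => C i.castSucc j.castSucc

/-- The upper-right `3×1` block `v` of a `4×4` matrix. -/
def vblk (C : Matrix (Fin 4) (Fin 4) ℝ) : Fin 3 → ℝ :=
  fun i => C i.castSucc (Fin.last 3)

/-- The `(4,4)` entry `N` of a `4×4` matrix. -/
def Nent (C : Matrix (Fin 4) (Fin 4) ℝ) : ℝ := C (Fin.last 3) (Fin.last 3)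

/-- `A(C) = (1/N) P − (1/N²) v vᵀ`. -/
def Amat (C : Matrix (Fin 4) (Fin 4) ℝ) : Matrix (Fin 3) (Fin 3) ℝ :=
  (1 / Nent C) • Pblk C - (1 / (Nent C) ^ 2) • vecMulVec (vblk C) (vblk C)

lemma pose_eq (R : Matrix (Fin 3) (Fin 3) ℝ) (t : Fin 3 → ℝ) :
    pose R t = !![R 0 0, R 0 1, R 0 2, t 0; R 1 0, R 1 1, R 1 2, t 1;
                  R 2 0, R 2 1, R 2 2, t 2; 0, 0, 0, 1] := by
  ext i j
  fin_cases i <;> fin_cases j <;>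
    simp [pose, Matrix.reindex_apply, finSumFinEquiv, Fin.ext_iff] <;> rfl

set_option maxHeartbeats 4000000 in
/-- Key conjugation identity in the proof of Theorem 3: `A(T C Tᵀ) = R A(C) Rᵀ`. -/
theorem Amat_conj (C : Matrix (Fin 4) (Fin 4) ℝ) (hC : C.IsSymm)
    (hN : 0 < Nent C)
    (R : Matrix (Fin 3) (Fin 3) ℝ) (t : Fin 3 → ℝ) (hR : Rᵀ * R = 1) :
    Amat (pose R t * C * (pose R t)ᵀ) = R * Amat C * Rᵀ := by
  have hNne : Nent C ≠ 0 := ne_of_gt hN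
  have hs : ∀ i j : Fin 4, C j i = C i j := fun i j => hC.apply i j
  have c0 : (Fin.castSucc (0 : Fin 3) : Fin 4) = 0 := rfl
  have c1 : (Fin.castSucc (1 : Fin 3) : Fin 4) = 1 := rfl
  have c2 : (Fin.castSucc (2 : Fin 3) : Fin 4) = 2 := rfl
  have l3 : (Fin.last 3 : Fin 4) = 3 := rfl
  have m2 : (⟨2, by norm_num⟩ : Fin 3) = 2 := rfl
  have m0 : (⟨0, by norm_num⟩ : Fin 3) = 0 := rfl
  have m1 : (⟨1, by norm_num⟩ : Fin 3) = 1 := rfl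
  simp only [Nent, l3] at hNne
  ext i j
  fin_cases i <;> fin_cases j <;>
    · simp only [Amat, Pblk, vblk, Nent, pose_eq, Matrix.mul_apply, Fin.sum_univ_four,
        Fin.sum_univ_three, Matrix.sub_apply, Matrix.smul_apply, Matrix.vecMulVec_apply,
        Matrix.of_apply, Matrix.transpose_apply, Matrix.cons_val', Matrix.cons_val_zero,
        Matrix.cons_val_one, Matrix.head_cons, Matrix.empty_val', Matrix.cons_val_fin_one,
        Matrix.head_fin_const, Fin.isValue, smul_eq_mul, Matrix.cons_val_two,
        Matrix.cons_val_three, Matrix.tail_cons, c0, c1, c2, l3, m2, m0, m1]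
      rw [hs 0 1, hs 0 2, hs 1 2, hs 0 3, hs 1 3, hs 2 3]
      field_simp
      ring_nf
      field_simp
      ring

end
end

section
/- Let C₁,…,C_M be 4×4 real symmetric matrices and T₁,…,T_M homogeneous pose matrices T_j = [[R_j, t_j],[0, 1]] with R_jᵀR_j = I and det R_j = 1, such that the (4,4)-entry of S := Σⱼ T_j C_j T_jᵀ is positive. Then for any homogeneous pose matrix T₀ = [[R₀, t₀],[0, 1]] with R₀ᵀR₀ = I and det R₀ = 1, and each l ∈ {1,2,3}: λ_l(A(Σⱼ (T₀T_j) C_j (T₀T_j)ᵀ)) = λ_l(A(Σⱼ T_j C_j T_jᵀ)). In other words, the bundle adjustment cost is invariant to left-multiplying all poses by a common rigid transform (gauge freedom). -/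
open Matrix

noncomputable section

/-- The `l`-th largest eigenvalue (`l = 0` being the largest) of a real symmetric
`3×3` matrix. -/
def eigDesc {A : Matrix (Fin 3) (Fin 3) ℝ} (hA : A.IsHermitian) (l : Fin 3) : ℝ :=
  (hA.eigenvalues ∘ Tuple.sort hA.eigenvalues) l.rev

open Polynomial in
theorem aux_roots_prod (n : ℕ) (f : Fin n → ℝ) :
    (∏ i, (X - C (f i))).roots = Multiset.map f Finset.univ.val := by
  rw [Finset.prod_eq_multiset_prod,
    ← Polynomial.roots_multiset_prod_X_sub_C (Finset.univ.val.map f)]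
  congr 1
  rw [Multiset.map_map]
  simp [Function.comp_def]

open Polynomial in
theorem aux_charpoly_conj (n : ℕ) (Q A : Matrix (Fin n) (Fin n) ℝ) (hQ : Qᵀ * Q = 1) :
    (Q * A * Qᵀ).charpoly = A.charpoly := by
  have hQ' : Q * Qᵀ = 1 := mul_eq_one_comm.mp hQ
  set Q' := Q.map (C : ℝ →+* ℝ[X]) with hQ'def
  have h1 : Q' * Q'ᵀ = 1 := by
    have := congrArg (Matrix.map · (C : ℝ →+* ℝ[X])) hQ'
    simpa [hQ'def, Matrix.map_mul, Matrix.map_one, Matrix.transpose_map] using this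
  have key : charmatrix (Q * A * Qᵀ) = Q' * charmatrix A * Q'ᵀ := by
    rw [charmatrix, charmatrix, Matrix.mul_sub, Matrix.sub_mul]
    congr 1
    · rw [Matrix.scalar_apply, ← Matrix.smul_one_eq_diagonal, Matrix.mul_smul,
        Matrix.smul_mul, mul_one, h1]
    · simp [hQ'def, Matrix.map_mul, Matrix.transpose_map]
  rw [Matrix.charpoly, Matrix.charpoly, key, Matrix.det_mul, Matrix.det_mul,
    mul_right_comm, ← Matrix.det_mul, h1, Matrix.det_one, one_mul]

open Polynomial in
theorem aux_charpoly_eq_prod {n : ℕ} {A : Matrix (Fin n) (Fin n) ℝ} (hA : A.IsHermitian) :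
    A.charpoly = ∏ i, (X - C (hA.eigenvalues i)) := by
  have hd : (Matrix.diagonal hA.eigenvalues).charpoly = ∏ i, (X - C (hA.eigenvalues i)) := by
    rw [Matrix.charpoly]
    have : charmatrix (Matrix.diagonal hA.eigenvalues)
        = Matrix.diagonal (fun i => X - C (hA.eigenvalues i)) := by
      ext i j
      by_cases h : i = j <;> simp [charmatrix_apply, Matrix.diagonal_apply, h]
    rw [this, Matrix.det_diagonal]
  set U : Matrix (Fin n) (Fin n) ℝ := (hA.eigenvectorUnitary : Matrix (Fin n) (Fin n) ℝ) with hUdef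
  have hU : Uᵀ * U = 1 := by
    have := hA.eigenvectorUnitary.2.1
    simpa [hUdef, Matrix.star_eq_conjTranspose,
      Matrix.conjTranspose_eq_transpose_of_trivial] using this
  have hAeq : A = U * Matrix.diagonal hA.eigenvalues * Uᵀ := by
    conv_lhs => rw [hA.spectral_theorem]
    congr 1 <;>
      simp [hUdef, Matrix.star_eq_conjTranspose, Matrix.conjTranspose_eq_transpose_of_trivial]
  have h2 := congrArg Matrix.charpoly hAeq
  rw [h2, aux_charpoly_conj n U _ hU, hd]

theorem aux_eig_multiset {n : ℕ} {A : Matrix (Fin n) (Fin n) ℝ} (hA : A.IsHermitian) :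
    Multiset.map hA.eigenvalues Finset.univ.val = A.charpoly.roots := by
  rw [aux_charpoly_eq_prod hA, aux_roots_prod]

theorem aux_sorted_eq {n : ℕ} {f g : Fin n → ℝ}
    (h : Multiset.map f Finset.univ.val = Multiset.map g Finset.univ.val) :
    f ∘ Tuple.sort f = g ∘ Tuple.sort g := by
  apply List.ofFn_injective
  have hc : ∀ (u : Fin n → ℝ), (List.ofFn u : Multiset ℝ) = Multiset.map u Finset.univ.val := by
    intro u; simp [List.ofFn_eq_map, Fin.univ_def]
  refine List.Perm.eq_of_sortedLE ((Tuple.monotone_sort f).sortedLE_ofFn)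
    ((Tuple.monotone_sort g).sortedLE_ofFn) ?_
  rw [← Multiset.coe_eq_coe, hc, hc]
  calc Multiset.map (f ∘ Tuple.sort f) Finset.univ.val
      = Multiset.map f Finset.univ.val := by
        rw [← hc, ← hc, Multiset.coe_eq_coe]
        exact (Tuple.sort f).ofFn_comp_perm f
    _ = Multiset.map g Finset.univ.val := h
    _ = Multiset.map (g ∘ Tuple.sort g) Finset.univ.val := by
        rw [← hc, ← hc, Multiset.coe_eq_coe]
        exact ((Tuple.sort g).ofFn_comp_perm g).symm

theorem aux_symm_decomp (S : Matrix (Fin 4) (Fin 4) ℝ) (hS : S.IsSymm) :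
    S = Matrix.reindex finSumFinEquiv finSumFinEquiv (Matrix.fromBlocks (Pblk S)
      (Matrix.of fun i (_ : Fin 1) => vblk S i)
      (Matrix.of fun (_ : Fin 1) j => vblk S j)
      (Matrix.of fun (_ : Fin 1) (_ : Fin 1) => Nent S)) := by
  ext a b
  obtain ⟨p, rfl⟩ := (finSumFinEquiv (m := 3) (n := 1)).surjective a
  obtain ⟨q, rfl⟩ := (finSumFinEquiv (m := 3) (n := 1)).surjective b
  simp only [Matrix.reindex_apply, Matrix.submatrix_apply, Equiv.symm_apply_apply]
  rcases p with i | i <;> rcases q with j | j <;>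
    simp only [finSumFinEquiv_apply_left, finSumFinEquiv_apply_right,
      Matrix.fromBlocks_apply₁₁, Matrix.fromBlocks_apply₁₂, Matrix.fromBlocks_apply₂₁,
      Matrix.fromBlocks_apply₂₂, Matrix.of_apply, Pblk, vblk, Nent]
  · rfl
  · have : Fin.natAdd 3 j = Fin.last 3 := by fin_cases j; rfl
    rw [this]; rfl
  · have : Fin.natAdd 3 i = Fin.last 3 := by fin_cases i; rfl
    rw [this]
    exact hS.apply _ _
  · have hi : Fin.natAdd 3 i = Fin.last 3 := by fin_cases i; rfl
    have hj : Fin.natAdd 3 j = Fin.last 3 := by fin_cases j; rfl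
    rw [hi, hj]

theorem aux_Pblk_reindex (Z : Matrix (Fin 3 ⊕ Fin 1) (Fin 3 ⊕ Fin 1) ℝ) :
    Pblk (Matrix.reindex finSumFinEquiv finSumFinEquiv Z)
      = Matrix.of fun i j => Z (Sum.inl i) (Sum.inl j) := by
  ext i j
  have h : ∀ i : Fin 3, (finSumFinEquiv (m := 3) (n := 1)).symm i.castSucc = Sum.inl i := by
    intro i; simpa using finSumFinEquiv_symm_apply_castAdd (n := 1) i
  simp [Pblk, h]

theorem aux_vblk_reindex (Z : Matrix (Fin 3 ⊕ Fin 1) (Fin 3 ⊕ Fin 1) ℝ) :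
    vblk (Matrix.reindex finSumFinEquiv finSumFinEquiv Z)
      = fun i => Z (Sum.inl i) (Sum.inr 0) := by
  ext i
  have h : ∀ i : Fin 3, (finSumFinEquiv (m := 3) (n := 1)).symm i.castSucc = Sum.inl i := by
    intro i; simpa using finSumFinEquiv_symm_apply_castAdd (n := 1) i
  simp only [vblk, h, Matrix.reindex_apply, Matrix.submatrix_apply, finSumFinEquiv_symm_last]

theorem aux_Nent_reindex (Z : Matrix (Fin 3 ⊕ Fin 1) (Fin 3 ⊕ Fin 1) ℝ) :
    Nent (Matrix.reindex finSumFinEquiv finSumFinEquiv Z) = Z (Sum.inr 0) (Sum.inr 0) := by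
  simp only [Nent, Matrix.reindex_apply, Matrix.submatrix_apply, finSumFinEquiv_symm_last]

theorem aux_reindex_mul (A B : Matrix (Fin 3 ⊕ Fin 1) (Fin 3 ⊕ Fin 1) ℝ) :
    (Matrix.reindex finSumFinEquiv finSumFinEquiv A)
        * (Matrix.reindex finSumFinEquiv finSumFinEquiv B)
      = Matrix.reindex finSumFinEquiv finSumFinEquiv (A * B) := by
  simp only [Matrix.reindex_apply]
  exact Matrix.submatrix_mul_equiv A B _ _ _

theorem aux_Amat_conj (S : Matrix (Fin 4) (Fin 4) ℝ) (hS : S.IsSymm)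
    (R₀ : Matrix (Fin 3) (Fin 3) ℝ) (t₀ : Fin 3 → ℝ) (hN : Nent S ≠ 0) :
    Amat (pose R₀ t₀ * S * (pose R₀ t₀)ᵀ) = R₀ * Amat S * R₀ᵀ := by
  have hN' : S (Fin.last 3) (Fin.last 3) ≠ 0 := hN
  conv_lhs => rw [aux_symm_decomp S hS]
  rw [pose, Matrix.transpose_reindex, Matrix.fromBlocks_transpose, aux_reindex_mul,
    aux_reindex_mul, Matrix.fromBlocks_multiply, Matrix.fromBlocks_multiply]
  rw [Amat, aux_Pblk_reindex, aux_vblk_reindex, aux_Nent_reindex]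
  simp only [Matrix.fromBlocks_apply₁₁, Matrix.fromBlocks_apply₁₂, Matrix.fromBlocks_apply₂₂,
    Matrix.fromBlocks_apply₂₁]
  ext i j
  simp only [Amat, Matrix.sub_apply, Matrix.smul_apply, Matrix.of_apply, Matrix.mul_apply,
    Matrix.add_apply, Matrix.vecMulVec_apply, Matrix.transpose_apply, Matrix.zero_apply,
    Matrix.one_apply, smul_eq_mul, Fin.sum_univ_three, Fin.sum_univ_succ, Finset.univ_unique,
    Finset.sum_singleton, Pblk, vblk, Nent, Fin.default_eq_zero, eq_self_iff_true, if_true]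
  generalize S (Fin.last 3) (Fin.last 3) = x at hN' ⊢
  field_simp [hN']
  ring

/-- Gauge freedom: the BA cost is invariant to left-multiplying all poses by a common
rigid transform. -/
theorem gauge_freedom {M : ℕ} (C : Fin M → Matrix (Fin 4) (Fin 4) ℝ)
    (hC : ∀ j, (C j).IsSymm)
    (R : Fin M → Matrix (Fin 3) (Fin 3) ℝ) (t : Fin M → Fin 3 → ℝ)
    (hR : ∀ j, (R j)ᵀ * R j = 1) (hdet : ∀ j, (R j).det = 1)
    (hN : 0 < Nent (∑ j, pose (R j) (t j) * C j * (pose (R j) (t j))ᵀ))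
    (R₀ : Matrix (Fin 3) (Fin 3) ℝ) (t₀ : Fin 3 → ℝ)
    (hR₀ : R₀ᵀ * R₀ = 1) (hdet₀ : R₀.det = 1)
    (h₁ : (Amat (∑ j, (pose R₀ t₀ * pose (R j) (t j)) * C j
        * (pose R₀ t₀ * pose (R j) (t j))ᵀ)).IsHermitian)
    (h₂ : (Amat (∑ j, pose (R j) (t j) * C j * (pose (R j) (t j))ᵀ)).IsHermitian) :
    ∀ l : Fin 3, eigDesc h₁ l = eigDesc h₂ l := by
  set S := ∑ j, pose (R j) (t j) * C j * (pose (R j) (t j))ᵀ with hSdef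
  have hS : S.IsSymm := by
    show Sᵀ = S
    rw [hSdef, Matrix.transpose_sum]
    refine Finset.sum_congr rfl fun j _ => ?_
    rw [Matrix.transpose_mul, Matrix.transpose_mul, Matrix.transpose_transpose, (hC j),
      Matrix.mul_assoc]
  have hsum : (∑ j, (pose R₀ t₀ * pose (R j) (t j)) * C j
      * (pose R₀ t₀ * pose (R j) (t j))ᵀ) = pose R₀ t₀ * S * (pose R₀ t₀)ᵀ := by
    rw [hSdef, Finset.mul_sum, Finset.sum_mul]
    refine Finset.sum_congr rfl fun j _ => ?_
    rw [Matrix.transpose_mul]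
    simp only [Matrix.mul_assoc]
  have hAeq : Amat (∑ j, (pose R₀ t₀ * pose (R j) (t j)) * C j
      * (pose R₀ t₀ * pose (R j) (t j))ᵀ) = R₀ * Amat S * R₀ᵀ := by
    rw [hsum]
    exact aux_Amat_conj S hS R₀ t₀ (ne_of_gt hN)
  have hchar : (Amat (∑ j, (pose R₀ t₀ * pose (R j) (t j)) * C j
      * (pose R₀ t₀ * pose (R j) (t j))ᵀ)).charpoly = (Amat S).charpoly := by
    rw [congrArg Matrix.charpoly hAeq]
    exact aux_charpoly_conj 3 R₀ (Amat S) hR₀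
  have hmult : Multiset.map h₁.eigenvalues Finset.univ.val
      = Multiset.map h₂.eigenvalues Finset.univ.val := by
    rw [aux_eig_multiset h₁, aux_eig_multiset h₂, hchar]
  have hsort := aux_sorted_eq hmult
  intro l
  exact congrFun hsort l.rev

end
end

section
/- Let p₁,…,p_N ∈ ℝ³ with N > 0, centroid p̄ = (1/N)Σₖ pₖ and scatter matrix A = (1/N)Σₖ (pₖ−p̄)(pₖ−p̄)ᵀ, with eigenvalues λ₁ ≥ λ₂ ≥ λ₃. Then: (i) for every unit vector n ∈ ℝ³ and every q ∈ ℝ³, (1/N)Σₖ ‖(I − n nᵀ)(pₖ − q)‖² ≥ λ₂ + λ₃; and (ii) if u₁ is a unit eigenvector of A with eigenvalue λ₁, then (1/N)Σₖ ‖(I − u₁u₁ᵀ)(pₖ − p̄)‖² = λ₂ + λ₃. Hence the minimum over all unit directions n and points q of the average squared point-to-edge distance equals λ₂ + λ₃, attained at n = u₁ and q = p̄. -/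
open Matrix

noncomputable section

section helpers

lemma projNorm (n v : Fin 3 → ℝ) (hn : n ⬝ᵥ n = 1) :
    ((1 - vecMulVec n n) *ᵥ v) ⬝ᵥ ((1 - vecMulVec n n) *ᵥ v) = v ⬝ᵥ v - (n ⬝ᵥ v)^2 := by
  have h : (1 - vecMulVec n n) *ᵥ v = v - (n ⬝ᵥ v) • n := by
    rw [sub_mulVec, one_mulVec]
    congr 1
    ext i
    simp [vecMulVec, mulVec, dotProduct, Finset.mul_sum, mul_comm, mul_left_comm]
  rw [h]
  simp [dotProduct_sub, sub_dotProduct, dotProduct_smul, smul_dotProduct, hn,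
    dotProduct_comm v n]
  ring

lemma sum_dot {N : ℕ} (c : Fin N → Fin 3 → ℝ) (d : Fin 3 → ℝ) :
    ∑ k, c k ⬝ᵥ d = (∑ k, c k) ⬝ᵥ d := by
  simp only [dotProduct, Finset.sum_apply, Finset.sum_mul]
  exact Finset.sum_comm ..

lemma dot_sum' {N : ℕ} (d : Fin 3 → ℝ) (c : Fin N → Fin 3 → ℝ) :
    ∑ k, d ⬝ᵥ c k = d ⬝ᵥ (∑ k, c k) := by
  simp only [dotProduct, Finset.sum_apply, Finset.mul_sum]
  exact Finset.sum_comm ..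

lemma vmv_mulVec (c v : Fin 3 → ℝ) : vecMulVec c c *ᵥ v = (c ⬝ᵥ v) • c := by
  ext i
  simp [vecMulVec, mulVec, dotProduct, Finset.mul_sum, mul_comm, mul_left_comm]

lemma sum_mulVec' {N : ℕ} (M : Fin N → Matrix (Fin 3) (Fin 3) ℝ) (v : Fin 3 → ℝ) :
    (∑ k, M k) *ᵥ v = ∑ k, M k *ᵥ v := by
  ext i
  simp only [mulVec, dotProduct, Finset.sum_apply, Matrix.sum_apply, Finset.sum_mul]
  exact Finset.sum_comm ..

variable {A : Matrix (Fin 3) (Fin 3) ℝ} (hA : A.IsHermitian)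

lemma traceEq : A.trace = ∑ i, hA.eigenvalues i := by
  set U := (hA.eigenvectorUnitary : Matrix (Fin 3) (Fin 3) ℝ) with hUdef
  have hU : star U * U = 1 := Matrix.mem_unitaryGroup_iff'.mp hA.eigenvectorUnitary.2
  calc A.trace = (U * diagonal (RCLike.ofReal ∘ hA.eigenvalues) * star U).trace := by
        conv_lhs => rw [hA.spectral_theorem, Unitary.conjStarAlgAut_apply]
    _ = (star U * U * diagonal (RCLike.ofReal ∘ hA.eigenvalues)).trace := by
        rw [trace_mul_cycle, mul_assoc]
    _ = ∑ i, hA.eigenvalues i := by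
        rw [hU, one_mul, trace_diagonal]; simp

lemma rayleigh_le (lmax : ℝ) (hmax : ∀ i, hA.eigenvalues i ≤ lmax)
    (n : Fin 3 → ℝ) (hn : n ⬝ᵥ n = 1) : n ⬝ᵥ A *ᵥ n ≤ lmax := by
  set U := (hA.eigenvectorUnitary : Matrix (Fin 3) (Fin 3) ℝ) with hUdef
  have hU : U * star U = 1 := Matrix.mem_unitaryGroup_iff.mp hA.eigenvectorUnitary.2
  have hstar : star U = Uᵀ := by
    rw [Matrix.star_eq_conjTranspose, conjTranspose_eq_transpose_of_trivial]
  set m := Uᵀ *ᵥ n with hm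
  have key : ∀ w : Fin 3 → ℝ, n ⬝ᵥ U *ᵥ w = m ⬝ᵥ w := by
    intro w
    rw [hm, mulVec_transpose, dotProduct_mulVec]
  have hUm : U *ᵥ m = n := by
    rw [hm, mulVec_mulVec, ← hstar, hU, one_mulVec]
  have hmm : m ⬝ᵥ m = 1 := by rw [← key m, hUm, hn]
  have hval : n ⬝ᵥ A *ᵥ n = ∑ i, hA.eigenvalues i * (m i)^2 := by
    conv_lhs => rw [hA.spectral_theorem, Unitary.conjStarAlgAut_apply, hstar, ← mulVec_mulVec, ← mulVec_mulVec, key]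
    simp only [dotProduct, mulVec_diagonal, Function.comp_apply, RCLike.ofReal_real_eq_id,
      id_eq]
    exact Finset.sum_congr rfl fun i _ => by ring
  rw [hval]
  calc ∑ i, hA.eigenvalues i * (m i)^2 ≤ ∑ i, lmax * (m i)^2 :=
        Finset.sum_le_sum fun i _ => mul_le_mul_of_nonneg_right (hmax i) (sq_nonneg _)
    _ = lmax * (m ⬝ᵥ m) := by rw [← Finset.mul_sum]; simp [dotProduct, sq]
    _ = lmax := by rw [hmm, mul_one]

lemma costEq {N : ℕ} (hN : 0 < N) (p : Fin N → Fin 3 → ℝ)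
    (pbar : Fin 3 → ℝ) (hpbar : pbar = (1 / (N : ℝ)) • ∑ k, p k)
    (A : Matrix (Fin 3) (Fin 3) ℝ)
    (hA : A = (1 / (N : ℝ)) • ∑ k, vecMulVec (p k - pbar) (p k - pbar))
    (n q : Fin 3 → ℝ) (hn : n ⬝ᵥ n = 1) :
    (1 / (N : ℝ)) * ∑ k,
        ((1 - vecMulVec n n) *ᵥ (p k - q)) ⬝ᵥ ((1 - vecMulVec n n) *ᵥ (p k - q))
      = (A.trace - n ⬝ᵥ A *ᵥ n)
        + (((pbar - q) ⬝ᵥ (pbar - q)) - (n ⬝ᵥ (pbar - q))^2) := by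
  have hNne : (N : ℝ) ≠ 0 := Nat.cast_ne_zero.mpr hN.ne'
  set c : Fin N → Fin 3 → ℝ := fun k => p k - pbar with hcdef
  set d : Fin 3 → ℝ := pbar - q with hddef
  have hc : ∑ k, c k = 0 := by
    have : ∑ k, c k = (∑ k, p k) - (N : ℝ) • pbar := by
      rw [Finset.sum_sub_distrib, Finset.sum_const, Finset.card_univ, Fintype.card_fin,
        ← Nat.cast_smul_eq_nsmul ℝ]
    rw [this, hpbar, smul_smul, mul_one_div_cancel hNne, one_smul, sub_self]
  have htr : A.trace = (1 / (N : ℝ)) * ∑ k, c k ⬝ᵥ c k := by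
    rw [hA, trace_smul, trace_sum, smul_eq_mul]
    congr 1
  have hray : n ⬝ᵥ A *ᵥ n = (1 / (N : ℝ)) * ∑ k, (n ⬝ᵥ c k)^2 := by
    rw [hA, smul_mulVec, sum_mulVec', dotProduct_smul, smul_eq_mul]
    congr 1
    rw [← dot_sum']
    refine Finset.sum_congr rfl fun k _ => ?_
    rw [vmv_mulVec, dotProduct_smul, dotProduct_comm (c k) n, smul_eq_mul, sq]
  have hpt : ∀ k, ((1 - vecMulVec n n) *ᵥ (p k - q)) ⬝ᵥ ((1 - vecMulVec n n) *ᵥ (p k - q))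
      = (c k ⬝ᵥ c k - (n ⬝ᵥ c k)^2) + (d ⬝ᵥ d - (n ⬝ᵥ d)^2)
        + (2 * (c k ⬝ᵥ d) - 2 * (n ⬝ᵥ c k) * (n ⬝ᵥ d)) := by
    intro k
    have hsplit : p k - q = c k + d := by exact (sub_add_sub_cancel (p k) pbar q).symm
    rw [hsplit, projNorm n _ hn, dotProduct_add, add_dotProduct, add_dotProduct,
      dotProduct_add, dotProduct_comm d (c k)]
    ring
  have hsum : ∑ k, ((1 - vecMulVec n n) *ᵥ (p k - q)) ⬝ᵥ ((1 - vecMulVec n n) *ᵥ (p k - q))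
      = (∑ k, (c k ⬝ᵥ c k)) - (∑ k, (n ⬝ᵥ c k)^2) + (N : ℝ) * (d ⬝ᵥ d - (n ⬝ᵥ d)^2) := by
    rw [Finset.sum_congr rfl fun k _ => hpt k]
    rw [Finset.sum_add_distrib, Finset.sum_add_distrib, Finset.sum_sub_distrib,
      Finset.sum_sub_distrib, Finset.sum_sub_distrib]
    have h1 : ∑ k, 2 * (c k ⬝ᵥ d) = 0 := by
      rw [← Finset.mul_sum, sum_dot, hc, zero_dotProduct, mul_zero]
    have h2 : ∑ k, 2 * (n ⬝ᵥ c k) * (n ⬝ᵥ d) = 0 := by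
      have : ∑ k, (n ⬝ᵥ c k) = 0 := by rw [dot_sum', hc, dotProduct_zero]
      calc ∑ k, 2 * (n ⬝ᵥ c k) * (n ⬝ᵥ d) = (2 * (n ⬝ᵥ d)) * ∑ k, (n ⬝ᵥ c k) := by
            rw [Finset.mul_sum]; exact Finset.sum_congr rfl fun k _ => by ring
        _ = 0 := by rw [this, mul_zero]
    rw [h1, h2]
    simp only [Finset.sum_const, Finset.card_univ, Fintype.card_fin, nsmul_eq_mul]
    ring
  rw [hsum, htr, hray]
  field_simp

end helpers

lemma eigSum {A : Matrix (Fin 3) (Fin 3) ℝ} (hA : A.IsHermitian) :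
    eigDesc hA 0 + eigDesc hA 1 + eigDesc hA 2 = ∑ i, hA.eigenvalues i := by
  have h : ∑ l : Fin 3, eigDesc hA l = ∑ i, hA.eigenvalues i := by
    unfold eigDesc
    rw [show (fun l : Fin 3 => (hA.eigenvalues ∘ Tuple.sort hA.eigenvalues) l.rev)
        = (hA.eigenvalues ∘ Tuple.sort hA.eigenvalues) ∘ Fin.revPerm from rfl]
    rw [show Finset.univ.sum ((hA.eigenvalues ∘ ⇑(Tuple.sort hA.eigenvalues)) ∘ ⇑Fin.revPerm)
        = ∑ l, (hA.eigenvalues ∘ ⇑(Tuple.sort hA.eigenvalues)) (Fin.revPerm l) from rfl,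
      Equiv.sum_comp Fin.revPerm (hA.eigenvalues ∘ ⇑(Tuple.sort hA.eigenvalues))]
    exact Equiv.sum_comp (Tuple.sort hA.eigenvalues) hA.eigenvalues
  rw [← h, Fin.sum_univ_three]

lemma eigMax {A : Matrix (Fin 3) (Fin 3) ℝ} (hA : A.IsHermitian) (i : Fin 3) :
    hA.eigenvalues i ≤ eigDesc hA 0 := by
  have h1 : hA.eigenvalues i
      = (hA.eigenvalues ∘ Tuple.sort hA.eigenvalues) ((Tuple.sort hA.eigenvalues)⁻¹ i) := by
    simp
  rw [h1]
  exact Tuple.monotone_sort hA.eigenvalues (by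
    rw [Fin.le_def]
    have := (((Tuple.sort hA.eigenvalues)⁻¹) i).isLt
    simp only [Fin.rev]
    omega)

/-- Equation (8): closed-form elimination of the edge feature parameters.  The minimum
over unit directions `n` and anchor points `q` of the average squared point-to-edge
distance is `λ₂ + λ₃`, attained at `n = u₁`, `q = p̄`. -/
theorem edge_elimination {N : ℕ} (hN : 0 < N) (p : Fin N → Fin 3 → ℝ)
    (pbar : Fin 3 → ℝ) (hpbar : pbar = (1 / (N : ℝ)) • ∑ k, p k)
    (A : Matrix (Fin 3) (Fin 3) ℝ)
    (hA : A = (1 / (N : ℝ)) • ∑ k, vecMulVec (p k - pbar) (p k - pbar))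
    (hAH : A.IsHermitian) :
    (∀ n q : Fin 3 → ℝ, n ⬝ᵥ n = 1 →
        eigDesc hAH 1 + eigDesc hAH 2
          ≤ (1 / (N : ℝ)) * ∑ k,
              ((1 - vecMulVec n n).mulVec (p k - q)) ⬝ᵥ
                ((1 - vecMulVec n n).mulVec (p k - q)))
    ∧ (∀ u : Fin 3 → ℝ, u ⬝ᵥ u = 1 → A.mulVec u = eigDesc hAH 0 • u →
        (1 / (N : ℝ)) * ∑ k,
            ((1 - vecMulVec u u).mulVec (p k - pbar)) ⬝ᵥ
              ((1 - vecMulVec u u).mulVec (p k - pbar))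
          = eigDesc hAH 1 + eigDesc hAH 2) := by
  have htrace : A.trace = eigDesc hAH 0 + eigDesc hAH 1 + eigDesc hAH 2 :=
    (traceEq hAH).trans (eigSum hAH).symm
  constructor
  · intro n q hn
    rw [costEq hN p pbar hpbar A hA n q hn]
    have h1 : n ⬝ᵥ A *ᵥ n ≤ eigDesc hAH 0 := rayleigh_le hAH _ (eigMax hAH) n hn
    have h2 : (n ⬝ᵥ (pbar - q))^2 ≤ (pbar - q) ⬝ᵥ (pbar - q) := by
      have hcs := Finset.sum_mul_sq_le_sq_mul_sq Finset.univ n (pbar - q)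
      have hn' : (∑ i, n i ^ 2) = 1 := by
        rw [← hn]; simp [dotProduct, sq]
      calc (n ⬝ᵥ (pbar - q))^2 = (∑ i, n i * (pbar - q) i)^2 := rfl
        _ ≤ (∑ i, n i ^ 2) * (∑ i, (pbar - q) i ^ 2) := hcs
        _ = (pbar - q) ⬝ᵥ (pbar - q) := by
            rw [hn', one_mul]
            simp [dotProduct, sq]
    linarith
  · intro u hu heig
    rw [costEq hN p pbar hpbar A hA u pbar hu]
    have huA : u ⬝ᵥ A *ᵥ u = eigDesc hAH 0 := by
      rw [heig, dotProduct_smul, smul_eq_mul, hu, mul_one]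
    rw [huA, sub_self, zero_dotProduct, dotProduct_zero]
    rw [htrace]
    ring
  
end
end
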